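/- For every integer m ≥ 1 and every probability mass function p on [m], E[ max_{1 ≤ i ≤ m} | Σ_{j=1}^i p_{π(j)} − i/m | ] ≤ 16 σ(p). -/

import Mathlib

open Finset

namespace Stmt5Aux

variable {m : ℕ}

/-- Partial sum of `x` over the first `k` positions of `π`. -/
noncomputable def T (x : Fin m → ℝ) (π : Equiv.Perm (Fin m)) (k : ℕ) : ℝ :=
  ∑ j ∈ Finset.univ.filter (fun j : Fin m => (j : ℕ) < k), x (π j)

lemma T_zero (x : Fin m → ℝ) (π : Equiv.Perm (Fin m)) : T x π 0 = 0 := by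
  simp [T]

lemma T_succ (x : Fin m → ℝ) (π : Equiv.Perm (Fin m)) (k : ℕ) (hk : k < m) :
    T x π (k + 1) = T x π k + x (π ⟨k, hk⟩) := by
  unfold T
  have h : Finset.univ.filter (fun j : Fin m => (j : ℕ) < k + 1)
      = insert (⟨k, hk⟩ : Fin m) (Finset.univ.filter (fun j : Fin m => (j : ℕ) < k)) := by
    ext j
    simp only [mem_filter, mem_univ, true_and, mem_insert, Fin.ext_iff]
    omega
  rw [h, Finset.sum_insert (by simp)]
  ring

lemma T_split (x : Fin m → ℝ) (π : Equiv.Perm (Fin m)) (k : ℕ) :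
    T x π k + ∑ j ∈ Finset.univ.filter (fun j : Fin m => k ≤ (j : ℕ)), x (π j)
      = ∑ v, x v := by
  have h : ∑ j ∈ Finset.univ.filter (fun j : Fin m => k ≤ (j : ℕ)), x (π j)
      = ∑ j ∈ Finset.univ.filter (fun j : Fin m => ¬ ((j : ℕ) < k)), x (π j) := by
    apply Finset.sum_congr _ (fun _ _ => rfl)
    apply Finset.filter_congr
    intro j _
    simp [not_lt]
  rw [h]
  unfold T
  rw [Finset.sum_filter_add_sum_filter_not]
  exact Equiv.sum_comp π x

lemma T_swap (x : Fin m → ℝ) (π : Equiv.Perm (Fin m)) (a b : Fin m) (k : ℕ)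
    (ha : k ≤ (a : ℕ)) (hb : k ≤ (b : ℕ)) :
    T x (π * Equiv.swap a b) k = T x π k := by
  unfold T
  apply Finset.sum_congr rfl
  intro j hj
  simp only [mem_filter, mem_univ, true_and] at hj
  have hja : j ≠ a := by
    intro h; subst h; omega
  have hjb : j ≠ b := by
    intro h; subst h; omega
  rw [Equiv.Perm.mul_apply, Equiv.swap_apply_of_ne_of_ne hja hjb]

/-- Normalized martingale value. -/
noncomputable def M (x : Fin m → ℝ) (π : Equiv.Perm (Fin m)) (k : ℕ) : ℝ :=
  T x π k / ((m : ℝ) - (k : ℝ))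

/-- Running maximum of `|M|`. -/
noncomputable def A (x : Fin m → ℝ) (π : Equiv.Perm (Fin m)) (k : ℕ) : ℝ :=
  (Finset.range (k + 1)).sup' Finset.nonempty_range_add_one (fun j => |M x π j|)

noncomputable def sgn (x : Fin m → ℝ) (π : Equiv.Perm (Fin m)) (k : ℕ) : ℝ :=
  if 0 ≤ M x π k then 1 else -1

lemma M_swap (x : Fin m → ℝ) (π : Equiv.Perm (Fin m)) (a b : Fin m) (k : ℕ)
    (ha : k ≤ (a : ℕ)) (hb : k ≤ (b : ℕ)) :
    M x (π * Equiv.swap a b) k = M x π k := by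
  unfold M; rw [T_swap x π a b k ha hb]

lemma A_swap (x : Fin m → ℝ) (π : Equiv.Perm (Fin m)) (a b : Fin m) (k : ℕ)
    (ha : k ≤ (a : ℕ)) (hb : k ≤ (b : ℕ)) :
    A x (π * Equiv.swap a b) k = A x π k := by
  unfold A
  apply Finset.sup'_congr _ rfl
  intro j hj
  rw [Finset.mem_range] at hj
  rw [M_swap x π a b j (by omega) (by omega)]

lemma sgn_swap (x : Fin m → ℝ) (π : Equiv.Perm (Fin m)) (a b : Fin m) (k : ℕ)
    (ha : k ≤ (a : ℕ)) (hb : k ≤ (b : ℕ)) :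
    sgn x (π * Equiv.swap a b) k = sgn x π k := by
  unfold sgn; rw [M_swap x π a b k ha hb]

lemma A_nonneg (x : Fin m → ℝ) (π : Equiv.Perm (Fin m)) (k : ℕ) : 0 ≤ A x π k := by
  have := Finset.le_sup' (fun j => |M x π j|) (Finset.mem_range.mpr (Nat.succ_pos k))
  exact le_trans (abs_nonneg _) this

lemma le_A (x : Fin m → ℝ) (π : Equiv.Perm (Fin m)) {j k : ℕ} (h : j ≤ k) :
    |M x π j| ≤ A x π k :=
  Finset.le_sup' (fun j => |M x π j|) (Finset.mem_range.mpr (by omega))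

/-- Key bijection step: right multiplication by a swap. -/
lemma sum_swap_eq (x : Fin m → ℝ) (g : Equiv.Perm (Fin m) → ℝ) (a b : Fin m)
    (hg : ∀ π, g (π * Equiv.swap a b) = g π) :
    ∑ π : Equiv.Perm (Fin m), g π * x (π a)
      = ∑ π : Equiv.Perm (Fin m), g π * x (π b) := by
  have := Equiv.sum_comp (Equiv.mulRight (Equiv.swap a b))
    (fun π : Equiv.Perm (Fin m) => g π * x (π a))
  rw [← this]
  apply Finset.sum_congr rfl
  intro π _
  simp only [Equiv.coe_mulRight]
  rw [hg π]
  congr 2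
  simp [Equiv.Perm.mul_apply]

lemma card_filter_lt (K : ℕ) (hK : K ≤ m) :
    (Finset.univ.filter (fun j : Fin m => (j : ℕ) < K)).card = K := by
  have : (Finset.univ.filter (fun j : Fin m => (j : ℕ) < K))
      = Finset.map (Fin.castLEEmb hK) Finset.univ := by
    ext j
    simp only [mem_filter, mem_univ, true_and, Finset.mem_map]
    constructor
    · intro h
      exact ⟨⟨(j : ℕ), h⟩, by simp [Fin.castLEEmb, Fin.ext_iff]⟩
    · rintro ⟨i, rfl⟩
      simp [Fin.castLEEmb]

  rw [this, Finset.card_map, Finset.card_univ, Fintype.card_fin]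

lemma card_filter_ge (k : ℕ) (hk : k ≤ m) :
    (Finset.univ.filter (fun j : Fin m => k ≤ (j : ℕ))).card = m - k := by
  have h : (Finset.univ.filter (fun j : Fin m => k ≤ (j : ℕ)))
      = Finset.univ.filter (fun j : Fin m => ¬ ((j : ℕ) < k)) := by
    apply Finset.filter_congr; intro j _; simp [not_lt]
  have h2 := Finset.card_filter_add_card_filter_not
    (s := (Finset.univ : Finset (Fin m))) (p := fun j : Fin m => (j : ℕ) < k)
  rw [card_filter_lt k hk] at h2
  rw [h]
  have : (Finset.univ : Finset (Fin m)).card = m := by simp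
  omega

/-- The conditional-expectation identity: for `g` depending only on the first `k`
positions, `∑_π g π * (T_k + (m-k) x_{π k}) = 0`. -/
lemma sum_key (x : Fin m → ℝ) (hx : ∑ v, x v = 0) (k : ℕ) (hk : k < m)
    (g : Equiv.Perm (Fin m) → ℝ)
    (hg : ∀ (π : Equiv.Perm (Fin m)) (b : Fin m), k ≤ (b : ℕ) →
      g (π * Equiv.swap ⟨k, hk⟩ b) = g π) :
    ∑ π : Equiv.Perm (Fin m),
      g π * (T x π k + ((m : ℝ) - (k : ℝ)) * x (π ⟨k, hk⟩)) = 0 := by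
  set F := Finset.univ.filter (fun b : Fin m => k ≤ (b : ℕ)) with hF
  have hcard : F.card = m - k := card_filter_ge k (le_of_lt hk)
  -- each b in F gives the same value
  have h1 : ∀ b ∈ F, (∑ π : Equiv.Perm (Fin m), g π * x (π b))
      = ∑ π : Equiv.Perm (Fin m), g π * x (π ⟨k, hk⟩) := by
    intro b hb
    rw [hF, mem_filter] at hb
    exact (sum_swap_eq x g (⟨k, hk⟩ : Fin m) b (fun π => hg π b hb.2)).symm
  have h2 : ∑ b ∈ F, ∑ π : Equiv.Perm (Fin m), g π * x (π b)
      = ((m : ℝ) - (k : ℝ)) * ∑ π : Equiv.Perm (Fin m), g π * x (π ⟨k, hk⟩) := by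
    rw [Finset.sum_congr rfl h1, Finset.sum_const, hcard, nsmul_eq_mul]
    congr 1
    have : ((m - k : ℕ) : ℝ) = (m : ℝ) - (k : ℝ) := by
      rw [Nat.cast_sub (le_of_lt hk)]
    rw [this]
  have h3 : ∑ b ∈ F, ∑ π : Equiv.Perm (Fin m), g π * x (π b)
      = ∑ π : Equiv.Perm (Fin m), g π * (- T x π k) := by
    rw [Finset.sum_comm]
    apply Finset.sum_congr rfl
    intro π _
    rw [← Finset.mul_sum]
    congr 1
    have := T_split x π k
    rw [hx] at this
    linarith
  rw [Finset.sum_congr rfl (fun π _ => mul_add (g π) (T x π k) _)]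
  rw [Finset.sum_add_distrib]
  have h4 : ∑ π : Equiv.Perm (Fin m), g π * (((m : ℝ) - (k : ℝ)) * x (π ⟨k, hk⟩))
      = ((m : ℝ) - (k : ℝ)) * ∑ π : Equiv.Perm (Fin m), g π * x (π ⟨k, hk⟩) := by
    rw [Finset.mul_sum]
    apply Finset.sum_congr rfl
    intro π _; ring
  rw [h4, ← h2, h3]
  simp [Finset.sum_neg_distrib]

section Pathwise

/-- Pathwise Doob L² inequality. -/
lemma doob_pathwise (f : ℕ → ℝ) (h0 : f 0 = 0) (K : ℕ) :
    ((Finset.range (K + 1)).sup' Finset.nonempty_range_add_one (fun j => |f j|)) ^ 2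
      ≤ 4 * (f K) ^ 2 - 4 * ∑ k ∈ Finset.range K,
          ((Finset.range (k + 1)).sup' Finset.nonempty_range_add_one (fun j => |f j|))
            * (if 0 ≤ f k then (1 : ℝ) else -1) * (f (k + 1) - f k) := by
  set Aa : ℕ → ℝ := fun k =>
    (Finset.range (k + 1)).sup' Finset.nonempty_range_add_one (fun j => |f j|) with hAa
  have hA0 : Aa 0 = 0 := by
    simp [hAa, h0]
  have hAnn : ∀ k, 0 ≤ Aa k := by
    intro k
    have : |f 0| ≤ Aa k := Finset.le_sup' (fun j => |f j|)
      (Finset.mem_range.mpr (Nat.succ_pos k))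
    simpa [h0] using this
  have hle : ∀ k, |f k| ≤ Aa k := fun k =>
    Finset.le_sup' (fun j => |f j|) (Finset.mem_range.mpr (Nat.lt_succ_self k))
  have hAsucc : ∀ k, Aa (k + 1) = max (Aa k) (|f (k + 1)|) := by
    intro k
    apply le_antisymm
    · apply Finset.sup'_le
      intro j hj
      rw [Finset.mem_range] at hj
      rcases Nat.lt_succ_iff_lt_or_eq.mp hj with h | h
      · exact le_trans (Finset.le_sup' (fun j => |f j|) (Finset.mem_range.mpr h))
          (le_max_left _ _)
      · subst h; exact le_max_right _ _
    · apply max_le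
      · apply Finset.sup'_le
        intro j hj
        rw [Finset.mem_range] at hj
        exact Finset.le_sup' (fun j => |f j|) (Finset.mem_range.mpr (by omega))
      · exact Finset.le_sup' (fun j => |f j|) (Finset.mem_range.mpr (by omega))
  -- main summation bound, by induction
  have main : ∀ N, ∑ k ∈ Finset.range N, Aa k * (|f (k + 1)| - |f k|)
      ≤ Aa N * |f N| - (Aa N) ^ 2 / 2 := by
    intro N
    induction N with
    | zero => simp [hA0, h0]
    | succ N ih =>
      rw [Finset.sum_range_succ]
      have step : Aa N * |f (N + 1)| - (Aa N) ^ 2 / 2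
          ≤ Aa (N + 1) * |f (N + 1)| - (Aa (N + 1)) ^ 2 / 2 := by
        rcases le_or_gt (|f (N + 1)|) (Aa N) with h | h
        · have : Aa (N + 1) = Aa N := by rw [hAsucc N]; exact max_eq_left h
          rw [this]
        · have hEq : Aa (N + 1) = |f (N + 1)| := by rw [hAsucc N]; exact max_eq_right h.le
          rw [hEq]
          nlinarith [sq_nonneg (|f (N + 1)| - Aa N)]
      nlinarith [ih]
  -- compare the two sums termwise
  have cmp : ∑ k ∈ Finset.range K,
        Aa k * (if 0 ≤ f k then (1 : ℝ) else -1) * (f (k + 1) - f k)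
      ≤ ∑ k ∈ Finset.range K, Aa k * (|f (k + 1)| - |f k|) := by
    apply Finset.sum_le_sum
    intro k _
    have h1 : (if 0 ≤ f k then (1 : ℝ) else -1) * f k = |f k| := by
      rcases le_or_gt 0 (f k) with h | h
      · rw [if_pos h, one_mul, abs_of_nonneg h]
      · rw [if_neg (not_le.mpr h), neg_one_mul, abs_of_neg h]
    have h2 : (if 0 ≤ f k then (1 : ℝ) else -1) * f (k + 1) ≤ |f (k + 1)| := by
      rcases le_or_gt 0 (f k) with h | h
      · rw [if_pos h, one_mul]; exact le_abs_self _
      · rw [if_neg (not_le.mpr h), neg_one_mul]; exact neg_le_abs _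
    calc Aa k * (if 0 ≤ f k then (1 : ℝ) else -1) * (f (k + 1) - f k)
        = Aa k * ((if 0 ≤ f k then (1 : ℝ) else -1) * f (k + 1)
            - (if 0 ≤ f k then (1 : ℝ) else -1) * f k) := by ring
      _ ≤ Aa k * (|f (k + 1)| - |f k|) := by
          apply mul_le_mul_of_nonneg_left _ (hAnn k)
          rw [h1]
          exact sub_le_sub_right h2 _
  have hfK : |f K| ≤ Aa K := hle K
  have habs : (f K) ^ 2 = |f K| ^ 2 := (sq_abs _).symm
  nlinarith [main K, cmp, sq_nonneg (Aa K - 2 * |f K|), hAnn K, abs_nonneg (f K)]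

end Pathwise

lemma M_zero (x : Fin m → ℝ) (π : Equiv.Perm (Fin m)) : M x π 0 = 0 := by
  simp [M, T_zero]

/-- Doob's L² inequality in expectation over permutations. -/
lemma doob_exp (x : Fin m → ℝ) (hx : ∑ v, x v = 0) (K : ℕ) (hK : K < m) :
    ∑ π : Equiv.Perm (Fin m), (A x π K) ^ 2
      ≤ 4 * ∑ π : Equiv.Perm (Fin m), (M x π K) ^ 2 := by
  have hzero : ∀ k ∈ Finset.range K,
      ∑ π : Equiv.Perm (Fin m),
        A x π k * sgn x π k * (M x π (k + 1) - M x π k) = 0 := by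
    intro k hkK
    rw [Finset.mem_range] at hkK
    have hkm : k < m := lt_trans hkK hK
    have hk1 : (k : ℝ) + 1 ≤ (m : ℝ) := by
      have : k + 1 ≤ m := hkm
      exact_mod_cast this
    have hne1 : ((m : ℝ) - (k : ℝ)) ≠ 0 := by
      have : (k : ℝ) < (m : ℝ) := by exact_mod_cast hkm
      linarith
    have hne2 : ((m : ℝ) - ((k : ℝ) + 1)) ≠ 0 := by
      have : k + 1 < m := lt_of_le_of_lt hkK hK
      have : ((k : ℝ) + 1) < (m : ℝ) := by exact_mod_cast this
      linarith
    set c : ℝ := (((m : ℝ) - (k : ℝ)) * ((m : ℝ) - ((k : ℝ) + 1)))⁻¹ with hc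
    have hdiff : ∀ π : Equiv.Perm (Fin m),
        M x π (k + 1) - M x π k
          = (T x π k + ((m : ℝ) - (k : ℝ)) * x (π ⟨k, hkm⟩)) * c := by
      intro π
      unfold M
      rw [T_succ x π k hkm, hc]
      push_cast
      field_simp
      ring
    have : ∑ π : Equiv.Perm (Fin m),
        A x π k * sgn x π k * (M x π (k + 1) - M x π k)
        = (∑ π : Equiv.Perm (Fin m),
            (A x π k * sgn x π k) * (T x π k + ((m : ℝ) - (k : ℝ)) * x (π ⟨k, hkm⟩))) * c := by
      rw [Finset.sum_mul]
      apply Finset.sum_congr rfl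
      intro π _
      rw [hdiff π]
      ring
    rw [this, sum_key x hx k hkm (fun π => A x π k * sgn x π k)
      (fun π b hb => by
        show A x (π * Equiv.swap ⟨k, hkm⟩ b) k * sgn x (π * Equiv.swap ⟨k, hkm⟩ b) k
          = A x π k * sgn x π k
        rw [A_swap x π _ b k (le_refl k) hb, sgn_swap x π _ b k (le_refl k) hb]),
      zero_mul]
  have hpath : ∀ π : Equiv.Perm (Fin m),
      (A x π K) ^ 2 ≤ 4 * (M x π K) ^ 2 - 4 * ∑ k ∈ Finset.range K,
        A x π k * sgn x π k * (M x π (k + 1) - M x π k) := by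
    intro π
    have := doob_pathwise (M x π) (M_zero x π) K
    simpa [A, sgn, M] using this
  calc ∑ π : Equiv.Perm (Fin m), (A x π K) ^ 2
      ≤ ∑ π : Equiv.Perm (Fin m), (4 * (M x π K) ^ 2 - 4 * ∑ k ∈ Finset.range K,
          A x π k * sgn x π k * (M x π (k + 1) - M x π k)) :=
        Finset.sum_le_sum (fun π _ => hpath π)
    _ = 4 * ∑ π : Equiv.Perm (Fin m), (M x π K) ^ 2 := by
        rw [Finset.sum_sub_distrib, ← Finset.mul_sum, ← Finset.mul_sum]
        rw [Finset.sum_comm]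
        rw [Finset.sum_congr rfl hzero]
        simp

section Variance

lemma sum_sq_single_eq (x : Fin m → ℝ) (b c : Fin m) :
    ∑ π : Equiv.Perm (Fin m), x (π b) ^ 2 = ∑ π : Equiv.Perm (Fin m), x (π c) ^ 2 := by
  have h := Equiv.sum_comp (Equiv.mulRight (Equiv.swap b c))
    (fun π : Equiv.Perm (Fin m) => x (π c) ^ 2)
  rw [← h]
  apply Finset.sum_congr rfl
  intro π _
  simp [Equiv.Perm.mul_apply]

lemma sum_sq_single (x : Fin m → ℝ) (b : Fin m) :
    (m : ℝ) * ∑ π : Equiv.Perm (Fin m), x (π b) ^ 2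
      = (m.factorial : ℝ) * ∑ v, x v ^ 2 := by
  have h1 : ∑ b' : Fin m, ∑ π : Equiv.Perm (Fin m), x (π b') ^ 2
      = (m : ℝ) * ∑ π : Equiv.Perm (Fin m), x (π b) ^ 2 := by
    rw [Finset.sum_congr rfl (fun b' _ => sum_sq_single_eq x b' b)]
    rw [Finset.sum_const, Finset.card_univ, Fintype.card_fin, nsmul_eq_mul]
  have h2 : ∑ b' : Fin m, ∑ π : Equiv.Perm (Fin m), x (π b') ^ 2
      = (m.factorial : ℝ) * ∑ v, x v ^ 2 := by
    rw [Finset.sum_comm]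
    have : ∀ π : Equiv.Perm (Fin m), ∑ b' : Fin m, x (π b') ^ 2 = ∑ v, x v ^ 2 :=
      fun π => Equiv.sum_comp π (fun v => x v ^ 2)
    rw [Finset.sum_congr rfl (fun π _ => this π), Finset.sum_const]
    simp [Fintype.card_perm, mul_comm]
  rw [← h1, h2]

lemma sum_pair_eq (x : Fin m → ℝ) (b b' c c' : Fin m) (h1 : b ≠ b') (h2 : c ≠ c') :
    ∑ π : Equiv.Perm (Fin m), x (π b) * x (π b')
      = ∑ π : Equiv.Perm (Fin m), x (π c) * x (π c') := by
  set d : Fin m := Equiv.swap b c b' with hd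
  have hdc : d ≠ c := by
    intro h
    apply h1
    have := congrArg (Equiv.swap b c) h
    rw [hd, Equiv.swap_apply_self, Equiv.swap_apply_right] at this
    exact this.symm ▸ rfl
  have hcc' : c ≠ c' := h2
  set e : Equiv.Perm (Fin m) := Equiv.swap b c * Equiv.swap c' d with he
  have hec : e c = b := by
    rw [he, Equiv.Perm.mul_apply, Equiv.swap_apply_of_ne_of_ne hcc' (Ne.symm hdc),
      Equiv.swap_apply_right]
  have hec' : e c' = b' := by
    rw [he, Equiv.Perm.mul_apply, Equiv.swap_apply_left, hd, Equiv.swap_apply_self]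
  have h := Equiv.sum_comp (Equiv.mulRight e)
    (fun π : Equiv.Perm (Fin m) => x (π c) * x (π c'))
  rw [← h]
  apply Finset.sum_congr rfl
  intro π _
  simp only [Equiv.coe_mulRight, Equiv.Perm.mul_apply]
  rw [hec, hec']

lemma sum_sq_total (x : Fin m → ℝ) :
    ∑ b : Fin m, ∑ π : Equiv.Perm (Fin m), x (π b) ^ 2
      = (m.factorial : ℝ) * ∑ v, x v ^ 2 := by
  rw [Finset.sum_comm]
  have : ∀ π : Equiv.Perm (Fin m), ∑ b : Fin m, x (π b) ^ 2 = ∑ v, x v ^ 2 :=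
    fun π => Equiv.sum_comp π (fun v => x v ^ 2)
  rw [Finset.sum_congr rfl (fun π _ => this π), Finset.sum_const]
  simp [Fintype.card_perm, mul_comm]

lemma sum_pair_nonpos (x : Fin m → ℝ) (hx : ∑ v, x v = 0) (hm2 : 2 ≤ m)
    (b b' : Fin m) (hbb : b ≠ b') :
    ∑ π : Equiv.Perm (Fin m), x (π b) * x (π b') ≤ 0 := by
  set t : ℝ := ∑ π : Equiv.Perm (Fin m), x (π b) * x (π b') with ht
  have hterm : ∀ (c c' : Fin m), c ≠ c' →
      (∑ π : Equiv.Perm (Fin m), x (π c) * x (π c')) = t :=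
    fun c c' h => (sum_pair_eq x b b' c c' hbb h).symm
  have h1 : ∑ c : Fin m, ∑ c' ∈ Finset.univ.erase c,
      ∑ π : Equiv.Perm (Fin m), x (π c) * x (π c')
      = (m : ℝ) * ((m - 1 : ℕ) : ℝ) * t := by
    have inner : ∀ c : Fin m, ∑ c' ∈ Finset.univ.erase c,
        ∑ π : Equiv.Perm (Fin m), x (π c) * x (π c') = ((m - 1 : ℕ) : ℝ) * t := by
      intro c
      rw [Finset.sum_congr rfl (fun c' hc' =>
        hterm c c' (Ne.symm (Finset.ne_of_mem_erase hc')))]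
      rw [Finset.sum_const, Finset.card_erase_of_mem (Finset.mem_univ _),
        Finset.card_univ, Fintype.card_fin, nsmul_eq_mul]
    rw [Finset.sum_congr rfl (fun c _ => inner c), Finset.sum_const,
      Finset.card_univ, Fintype.card_fin, nsmul_eq_mul]
    ring
  have h2 : ∑ c : Fin m, ∑ c' ∈ Finset.univ.erase c,
      ∑ π : Equiv.Perm (Fin m), x (π c) * x (π c')
      = - ((m.factorial : ℝ) * ∑ v, x v ^ 2) := by
    have inner : ∀ c : Fin m, ∑ c' ∈ Finset.univ.erase c,
        ∑ π : Equiv.Perm (Fin m), x (π c) * x (π c')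
        = - ∑ π : Equiv.Perm (Fin m), x (π c) ^ 2 := by
      intro c
      rw [Finset.sum_comm]
      have : ∀ π : Equiv.Perm (Fin m),
          ∑ c' ∈ Finset.univ.erase c, x (π c) * x (π c') = - x (π c) ^ 2 := by
        intro π
        rw [← Finset.mul_sum, Finset.sum_erase_eq_sub (Finset.mem_univ c)]
        rw [Equiv.sum_comp π x, hx]
        ring
      rw [Finset.sum_congr rfl (fun π _ => this π), Finset.sum_neg_distrib]
    rw [Finset.sum_congr rfl (fun c _ => inner c), Finset.sum_neg_distrib,
      sum_sq_total x]
  have hfac : (0 : ℝ) ≤ (m.factorial : ℝ) * ∑ v, x v ^ 2 := by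
    apply mul_nonneg (Nat.cast_nonneg _)
    exact Finset.sum_nonneg (fun v _ => sq_nonneg _)
  have hmm : (0 : ℝ) < (m : ℝ) * ((m - 1 : ℕ) : ℝ) := by
    apply mul_pos
    · exact_mod_cast Nat.lt_of_lt_of_le Nat.zero_lt_two hm2
    · have : 1 ≤ m - 1 := by omega
      exact_mod_cast Nat.lt_of_lt_of_le Nat.zero_lt_one this
  nlinarith [h1.symm.trans h2]

lemma sum_T_sq (x : Fin m → ℝ) (hx : ∑ v, x v = 0) (hm2 : 2 ≤ m)
    (K : ℕ) (hK : K ≤ m) :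
    ∑ π : Equiv.Perm (Fin m), (T x π K) ^ 2
      ≤ (K : ℝ) * (m.factorial : ℝ) * (∑ v, x v ^ 2) / m := by
  set F := Finset.univ.filter (fun j : Fin m => (j : ℕ) < K) with hF
  have hcard : F.card = K := card_filter_lt K hK
  have hexp : ∑ π : Equiv.Perm (Fin m), (T x π K) ^ 2
      = ∑ j ∈ F, ∑ j' ∈ F, ∑ π : Equiv.Perm (Fin m), x (π j) * x (π j') := by
    have : ∀ π : Equiv.Perm (Fin m),
        (T x π K) ^ 2 = ∑ j ∈ F, ∑ j' ∈ F, x (π j) * x (π j') := by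
      intro π
      rw [sq, T, ← hF, Finset.sum_mul_sum]
    rw [Finset.sum_congr rfl (fun π _ => this π), Finset.sum_comm]
    apply Finset.sum_congr rfl
    intro j _
    rw [Finset.sum_comm]
  rw [hexp]
  have hbound : ∀ j ∈ F, ∑ j' ∈ F, ∑ π : Equiv.Perm (Fin m), x (π j) * x (π j')
      ≤ (m.factorial : ℝ) * (∑ v, x v ^ 2) / m := by
    intro j hj
    rw [← Finset.add_sum_erase F _ hj]
    have hm0 : (m : ℝ) ≠ 0 := by
      have h : 0 < m := lt_of_lt_of_le Nat.zero_lt_two hm2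
      positivity
    have hdiag : ∑ π : Equiv.Perm (Fin m), x (π j) * x (π j)
        = (m.factorial : ℝ) * (∑ v, x v ^ 2) / m := by
      have h := sum_sq_single x j
      have : ∑ π : Equiv.Perm (Fin m), x (π j) * x (π j)
          = ∑ π : Equiv.Perm (Fin m), x (π j) ^ 2 := by
        apply Finset.sum_congr rfl; intro π _; ring
      rw [this]
      field_simp
      linarith [h]
    have hoff : ∑ j' ∈ F.erase j, ∑ π : Equiv.Perm (Fin m), x (π j) * x (π j') ≤ 0 := by
      apply Finset.sum_nonpos
      intro j' hj'
      exact sum_pair_nonpos x hx hm2 j j' (Ne.symm (Finset.ne_of_mem_erase hj'))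
    linarith [hdiag, hoff]
  calc ∑ j ∈ F, ∑ j' ∈ F, ∑ π : Equiv.Perm (Fin m), x (π j) * x (π j')
      ≤ ∑ j ∈ F, (m.factorial : ℝ) * (∑ v, x v ^ 2) / m :=
        Finset.sum_le_sum hbound
    _ = (K : ℝ) * (m.factorial : ℝ) * (∑ v, x v ^ 2) / m := by
        rw [Finset.sum_const, hcard, nsmul_eq_mul]; ring

end Variance

lemma T_rev (x : Fin m → ℝ) (hx : ∑ v, x v = 0) (π : Equiv.Perm (Fin m))
    (k : ℕ) (hk : k ≤ m) :
    T x (π * Fin.revPerm) (m - k) = - T x π k := by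
  have h : T x (π * Fin.revPerm) (m - k)
      = ∑ j ∈ Finset.univ.filter (fun j : Fin m => k ≤ (j : ℕ)), x (π j) := by
    unfold T
    apply Finset.sum_nbij' (i := fun a => Fin.rev a) (j := fun a => Fin.rev a)
    · intro a ha
      simp only [Finset.mem_filter, Finset.mem_univ, true_and] at ha ⊢
      rw [Fin.val_rev]
      omega
    · intro a ha
      simp only [Finset.mem_filter, Finset.mem_univ, true_and] at ha ⊢
      have := a.isLt
      rw [Fin.val_rev]
      omega
    · intro a _; exact Fin.rev_rev a
    · intro a _; exact Fin.rev_rev a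
    · intro a _
      simp [Equiv.Perm.mul_apply]
  have h2 := T_split x π k
  rw [hx] at h2
  rw [h]
  linarith

theorem core (hm2 : 2 ≤ m) (p : Fin m → ℝ) (hsum : ∑ v, p v = 1) :
    ((∑ π : Equiv.Perm (Fin m),
        ⨆ i : Fin m,
          |(∑ j ∈ Finset.univ.filter (fun j : Fin m => (j : ℕ) ≤ (i : ℕ)), p (π j))
            - (((i : ℕ) : ℝ) + 1) / m|) /
      (Fintype.card (Equiv.Perm (Fin m)) : ℝ))
      ≤ 16 * Real.sqrt (∑ v, (p v) ^ 2) := by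
  have hm0 : (0 : ℝ) < (m : ℝ) := by
    have : 0 < m := by omega
    exact_mod_cast this
  set x : Fin m → ℝ := fun v => p v - 1 / m with hxdef
  have hx : ∑ v, x v = 0 := by
    rw [hxdef]
    rw [Finset.sum_sub_distrib, hsum, Finset.sum_const, Finset.card_univ,
      Fintype.card_fin, nsmul_eq_mul]
    field_simp
    simp
  set s2 : ℝ := ∑ v, x v ^ 2 with hs2
  have hs2nn : 0 ≤ s2 := Finset.sum_nonneg (fun v _ => sq_nonneg _)
  have hs2le : s2 ≤ ∑ v, p v ^ 2 := by
    have hexpand : s2 = (∑ v, p v ^ 2) - (2 / m) * (∑ v, p v)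
        + (m : ℝ) * (1 / m) ^ 2 := by
      rw [hs2, hxdef]
      simp only
      rw [Finset.sum_congr rfl (fun v _ => by
        show (p v - 1 / m) ^ 2 = p v ^ 2 - (2 / m) * p v + (1 / m) ^ 2
        field_simp; ring)]
      rw [Finset.sum_add_distrib, Finset.sum_sub_distrib, ← Finset.mul_sum,
        Finset.sum_const, Finset.card_univ, Fintype.card_fin, nsmul_eq_mul]
    rw [hexpand, hsum]
    have h1 : (m : ℝ) * (1 / m) ^ 2 = 1 / m := by
      field_simp
    have h2 : (2 / (m : ℝ)) * 1 = 2 / m := by ring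
    rw [h1, h2]
    have h1m : 0 < 1 / (m : ℝ) := by positivity
    have h3 : 2 / (m : ℝ) = 2 * (1 / m) := by ring
    linarith
  -- the half-length
  set K : ℕ := (m + 1) / 2 with hKdef
  have hKlt : K < m := by omega
  have hKle : K ≤ m := le_of_lt hKlt
  have hmK1 : 1 ≤ m - K := by omega
  have hmKK : m - K ≤ K := by omega
  have hnum : m * K ≤ 16 * (m - K) ^ 2 := by
    rcases Nat.even_or_odd m with ⟨q, hq⟩ | ⟨q, hq⟩
    · have hK' : K = q := by omega
      have hmk : m - K = q := by omega
      have hq1 : 1 ≤ q := by omega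
      rw [hmk, hK', hq]
      nlinarith
    · have hK' : K = q + 1 := by omega
      have hmk : m - K = q := by omega
      have hq1 : 1 ≤ q := by omega
      rw [hmk, hK', hq]
      nlinarith
  -- definitions
  set B : Equiv.Perm (Fin m) → ℝ := fun π =>
    (Finset.range (K + 1)).sup' Finset.nonempty_range_add_one (fun k => |T x π k|)
    with hBdef
  have hBnn : ∀ π, 0 ≤ B π := by
    intro π
    have : |T x π 0| ≤ B π := Finset.le_sup' (fun k => |T x π k|)
      (Finset.mem_range.mpr (Nat.succ_pos K))
    rw [T_zero] at this
    simpa using this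
  have hBle : ∀ π (k : ℕ), k ≤ K → |T x π k| ≤ B π := fun π k hk =>
    Finset.le_sup' (fun k => |T x π k|) (Finset.mem_range.mpr (by omega))
  haveI : Nonempty (Fin m) := ⟨⟨0, by omega⟩⟩
  -- rewrite the body of the supremum
  have hbody : ∀ (π : Equiv.Perm (Fin m)) (i : Fin m),
      (∑ j ∈ Finset.univ.filter (fun j : Fin m => (j : ℕ) ≤ (i : ℕ)), p (π j))
        - (((i : ℕ) : ℝ) + 1) / m = T x π ((i : ℕ) + 1) := by
    intro π i
    unfold T
    have hfilt : Finset.univ.filter (fun j : Fin m => (j : ℕ) < (i : ℕ) + 1)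
        = Finset.univ.filter (fun j : Fin m => (j : ℕ) ≤ (i : ℕ)) := by
      apply Finset.filter_congr
      intro j _
      simp [Nat.lt_succ_iff]
    rw [hfilt]
    rw [hxdef]
    simp only
    rw [Finset.sum_sub_distrib, Finset.sum_const]
    have hcard : (Finset.univ.filter (fun j : Fin m => (j : ℕ) ≤ (i : ℕ))).card
        = (i : ℕ) + 1 := by
      rw [← hfilt]
      exact card_filter_lt ((i : ℕ) + 1) i.isLt
    rw [hcard, nsmul_eq_mul]
    push_cast
    field_simp
  -- pathwise bound by two copies of B
  have hpath : ∀ π : Equiv.Perm (Fin m),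
      (⨆ i : Fin m,
        |(∑ j ∈ Finset.univ.filter (fun j : Fin m => (j : ℕ) ≤ (i : ℕ)), p (π j))
          - (((i : ℕ) : ℝ) + 1) / m|)
        ≤ B π + B (π * Fin.revPerm) := by
    intro π
    apply ciSup_le
    intro i
    rw [hbody π i]
    rcases le_or_gt ((i : ℕ) + 1) K with h | h
    · have := hBle π ((i : ℕ) + 1) h
      linarith [hBnn (π * Fin.revPerm)]
    · have hrev : T x (π * Fin.revPerm) (m - ((i : ℕ) + 1)) = - T x π ((i : ℕ) + 1) :=
        T_rev x hx π ((i : ℕ) + 1) i.isLt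
      have habs : |T x π ((i : ℕ) + 1)| = |T x (π * Fin.revPerm) (m - ((i : ℕ) + 1))| := by
        rw [hrev, abs_neg]
      rw [habs]
      have hle2 : m - ((i : ℕ) + 1) ≤ K := by omega
      have := hBle (π * Fin.revPerm) _ hle2
      linarith [hBnn π]
  -- B bounded by m * A
  have hBA : ∀ π : Equiv.Perm (Fin m), B π ≤ (m : ℝ) * A x π K := by
    intro π
    apply Finset.sup'_le
    intro k hk
    rw [Finset.mem_range] at hk
    have hkK : k ≤ K := by omega
    have hpos : (0 : ℝ) < (m : ℝ) - (k : ℝ) := by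
      have : k < m := by omega
      have : (k : ℝ) < (m : ℝ) := by exact_mod_cast this
      linarith
    have hTk : |T x π k| = ((m : ℝ) - (k : ℝ)) * |M x π k| := by
      have : T x π k = M x π k * ((m : ℝ) - (k : ℝ)) := by
        rw [M, div_mul_cancel₀]
        exact ne_of_gt hpos
      rw [this, abs_mul, abs_of_pos hpos]
      ring
    rw [hTk]
    have h1 : (m : ℝ) - (k : ℝ) ≤ (m : ℝ) := by
      have : (0 : ℝ) ≤ (k : ℝ) := Nat.cast_nonneg k
      linarith
    exact mul_le_mul h1 (le_A x π hkK) (abs_nonneg _) (le_of_lt hm0)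
  -- sum everything
  set S : ℝ := ∑ π : Equiv.Perm (Fin m),
      ⨆ i : Fin m,
        |(∑ j ∈ Finset.univ.filter (fun j : Fin m => (j : ℕ) ≤ (i : ℕ)), p (π j))
          - (((i : ℕ) : ℝ) + 1) / m| with hSdef
  set SA : ℝ := ∑ π : Equiv.Perm (Fin m), A x π K with hSAdef
  have hSAnn : 0 ≤ SA := Finset.sum_nonneg (fun π _ => A_nonneg x π K)
  have hS2m : S ≤ 2 * (m : ℝ) * SA := by
    have h1 : S ≤ ∑ π : Equiv.Perm (Fin m), (B π + B (π * Fin.revPerm)) :=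
      Finset.sum_le_sum (fun π _ => hpath π)
    have h2 : ∑ π : Equiv.Perm (Fin m), B (π * Fin.revPerm)
        = ∑ π : Equiv.Perm (Fin m), B π :=
      Equiv.sum_comp (Equiv.mulRight (Fin.revPerm)) B
    have h3 : ∑ π : Equiv.Perm (Fin m), (B π + B (π * Fin.revPerm))
        = 2 * ∑ π : Equiv.Perm (Fin m), B π := by
      rw [Finset.sum_add_distrib, h2]; ring
    have h4 : ∑ π : Equiv.Perm (Fin m), B π
        ≤ ∑ π : Equiv.Perm (Fin m), (m : ℝ) * A x π K :=
      Finset.sum_le_sum (fun π _ => hBA π)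
    rw [← Finset.mul_sum] at h4
    calc S ≤ 2 * ∑ π : Equiv.Perm (Fin m), B π := by rw [← h3]; exact h1
      _ ≤ 2 * ((m : ℝ) * SA) := by linarith
      _ = 2 * (m : ℝ) * SA := by ring
  -- Cauchy-Schwarz and Doob
  set R : ℝ := (m.factorial : ℝ) with hRdef
  have hRpos : (0 : ℝ) < R := by
    rw [hRdef]; exact_mod_cast Nat.factorial_pos m
  have hCS : SA ^ 2 ≤ R * ∑ π : Equiv.Perm (Fin m), (A x π K) ^ 2 := by
    have := Finset.sum_mul_sq_le_sq_mul_sq Finset.univ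
      (fun _ : Equiv.Perm (Fin m) => (1 : ℝ)) (fun π => A x π K)
    simp only [one_mul, one_pow] at this
    rw [Finset.sum_const, Finset.card_univ, Fintype.card_perm, Fintype.card_fin,
      nsmul_eq_mul, mul_one] at this
    exact this
  have hDoob := doob_exp x hx K hKlt
  set D : ℝ := ((m - K : ℕ) : ℝ) with hDdef
  have hD1 : (1 : ℝ) ≤ D := by
    rw [hDdef]; exact_mod_cast hmK1
  have hDcast : (m : ℝ) - (K : ℝ) = D := by
    rw [hDdef]
    push_cast [Nat.cast_sub hKle]
    ring
  have hM2 : ∑ π : Equiv.Perm (Fin m), (M x π K) ^ 2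
      = (∑ π : Equiv.Perm (Fin m), (T x π K) ^ 2) / D ^ 2 := by
    rw [Finset.sum_div]
    apply Finset.sum_congr rfl
    intro π _
    rw [M, hDcast, div_pow]
  have hT2 := sum_T_sq x hx hm2 K hKle
  -- final numeric chain
  have hSA2 : SA ^ 2 ≤ 4 * R ^ 2 * (K : ℝ) * s2 / ((m : ℝ) * D ^ 2) := by
    have h5 : ∑ π : Equiv.Perm (Fin m), (A x π K) ^ 2
        ≤ 4 * ((K : ℝ) * R * s2 / m) / D ^ 2 := by
      calc ∑ π : Equiv.Perm (Fin m), (A x π K) ^ 2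
          ≤ 4 * ∑ π : Equiv.Perm (Fin m), (M x π K) ^ 2 := hDoob
        _ = 4 * ((∑ π : Equiv.Perm (Fin m), (T x π K) ^ 2) / D ^ 2) := by rw [hM2]
        _ ≤ 4 * ((K : ℝ) * R * s2 / m / D ^ 2) := by
            apply mul_le_mul_of_nonneg_left _ (by norm_num)
            exact div_le_div_of_nonneg_right hT2 (sq_nonneg D)
        _ = 4 * ((K : ℝ) * R * s2 / m) / D ^ 2 := by ring
    calc SA ^ 2 ≤ R * ∑ π : Equiv.Perm (Fin m), (A x π K) ^ 2 := hCS
      _ ≤ R * (4 * ((K : ℝ) * R * s2 / m) / D ^ 2) :=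
          mul_le_mul_of_nonneg_left h5 (le_of_lt hRpos)
      _ = 4 * R ^ 2 * (K : ℝ) * s2 / ((m : ℝ) * D ^ 2) := by ring
  -- numeric conclusion
  set P2 : ℝ := ∑ v, p v ^ 2 with hP2def
  have hP2nn : 0 ≤ P2 := le_trans hs2nn hs2le
  have hDpos : (0 : ℝ) < D := lt_of_lt_of_le one_pos hD1
  have hnumR : (m : ℝ) * (K : ℝ) ≤ 16 * D ^ 2 := by
    rw [hDdef]
    exact_mod_cast hnum
  have hstep : SA ^ 2 * (4 * (m : ℝ) ^ 2) ≤ 256 * R ^ 2 * s2 := by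
    have h7 : 4 * R ^ 2 * (K : ℝ) * s2 / ((m : ℝ) * D ^ 2) * (4 * (m : ℝ) ^ 2)
        = (16 * R ^ 2 * s2 / D ^ 2) * ((m : ℝ) * (K : ℝ)) := by
      field_simp
      ring
    have h8 : (16 * R ^ 2 * s2 / D ^ 2) * ((m : ℝ) * (K : ℝ))
        ≤ (16 * R ^ 2 * s2 / D ^ 2) * (16 * D ^ 2) :=
      mul_le_mul_of_nonneg_left hnumR
        (div_nonneg (mul_nonneg (mul_nonneg (by norm_num) (sq_nonneg R)) hs2nn)
          (sq_nonneg D))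
    have h9 : (16 * R ^ 2 * s2 / D ^ 2) * (16 * D ^ 2) = 256 * R ^ 2 * s2 := by
      field_simp
      ring
    calc SA ^ 2 * (4 * (m : ℝ) ^ 2)
        ≤ 4 * R ^ 2 * (K : ℝ) * s2 / ((m : ℝ) * D ^ 2) * (4 * (m : ℝ) ^ 2) :=
          mul_le_mul_of_nonneg_right hSA2
            (mul_nonneg (by norm_num) (sq_nonneg ((m : ℝ))))
      _ = (16 * R ^ 2 * s2 / D ^ 2) * ((m : ℝ) * (K : ℝ)) := h7
      _ ≤ (16 * R ^ 2 * s2 / D ^ 2) * (16 * D ^ 2) := h8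
      _ = 256 * R ^ 2 * s2 := h9
  have h10 : 2 * (m : ℝ) * SA ≤ 16 * R * Real.sqrt P2 := by
    have hnn : 0 ≤ 2 * (m : ℝ) * SA :=
      mul_nonneg (mul_nonneg (by norm_num) (le_of_lt hm0)) hSAnn
    have hrhsnn : 0 ≤ 16 * R * Real.sqrt P2 :=
      mul_nonneg (mul_nonneg (by norm_num) (le_of_lt hRpos)) (Real.sqrt_nonneg _)
    have hsq : (2 * (m : ℝ) * SA) ^ 2 ≤ (16 * R * Real.sqrt P2) ^ 2 := by
      have he : (16 * R * Real.sqrt P2) ^ 2 = 256 * R ^ 2 * P2 := by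
        rw [mul_pow, mul_pow, Real.sq_sqrt hP2nn]
        ring
      rw [he]
      have hle : 256 * R ^ 2 * s2 ≤ 256 * R ^ 2 * P2 :=
        mul_le_mul_of_nonneg_left hs2le (mul_nonneg (by norm_num) (sq_nonneg R))
      calc (2 * (m : ℝ) * SA) ^ 2 = SA ^ 2 * (4 * (m : ℝ) ^ 2) := by ring
        _ ≤ 256 * R ^ 2 * s2 := hstep
        _ ≤ 256 * R ^ 2 * P2 := hle
    calc 2 * (m : ℝ) * SA = Real.sqrt ((2 * (m : ℝ) * SA) ^ 2) :=
        (Real.sqrt_sq hnn).symm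
      _ ≤ Real.sqrt ((16 * R * Real.sqrt P2) ^ 2) := Real.sqrt_le_sqrt hsq
      _ = 16 * R * Real.sqrt P2 := Real.sqrt_sq hrhsnn
  have hcardR : (Fintype.card (Equiv.Perm (Fin m)) : ℝ) = R := by
    rw [hRdef, Fintype.card_perm, Fintype.card_fin]
  rw [hcardR, div_le_iff₀ hRpos]
  calc S ≤ 2 * (m : ℝ) * SA := hS2m
    _ ≤ 16 * R * Real.sqrt P2 := h10
    _ = 16 * Real.sqrt P2 * R := by ring

end Stmt5Aux




/-- Let `π` be a uniformly random permutation of `[m]` and `p` a probability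
mass function on `[m]`.  Then `E[ max_{1 ≤ i ≤ m} | Σ_{j=1}^i p_{π(j)} − i/m | ] ≤ 16 σ(p)`.
The expectation under the uniform distribution on permutations is written as the average over
all permutations; the index `i : Fin m` corresponds to `i+1 ∈ {1, …, m}`. -/
theorem stmt5 (m : ℕ) (hm : 1 ≤ m) (p : Fin m → ℝ)
    (hp : ∀ v, 0 < p v) (hsum : ∑ v, p v = 1) :
    ((∑ π : Equiv.Perm (Fin m),
        ⨆ i : Fin m,
          |(∑ j ∈ Finset.univ.filter (fun j : Fin m => (j : ℕ) ≤ (i : ℕ)), p (π j))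
            - (((i : ℕ) : ℝ) + 1) / m|) /
      (Fintype.card (Equiv.Perm (Fin m)) : ℝ))
      ≤ 16 * Real.sqrt (∑ v, (p v) ^ 2) := by
  rcases eq_or_lt_of_le hm with h1 | h2
  · -- m = 1
    subst h1
    simp only [Nat.cast_one]
    have hone : ∀ π : Equiv.Perm (Fin 1),
        (⨆ i : Fin 1,
          |(∑ j ∈ Finset.univ.filter (fun j : Fin 1 => (j : ℕ) ≤ (i : ℕ)), p (π j))
            - (((i : ℕ) : ℝ) + 1) / 1|) = 0 := by
      intro π
      rw [ciSup_unique]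
      have hfilt : (Finset.univ.filter (fun j : Fin 1 => (j : ℕ) ≤ ((default : Fin 1) : ℕ)))
          = Finset.univ := by
        apply Finset.filter_true_of_mem
        intro j _
        omega
      rw [hfilt]
      rw [Equiv.sum_comp π p, hsum]
      norm_num
    rw [Finset.sum_congr rfl (fun π _ => hone π), Finset.sum_const]
    simp only [smul_zero, zero_div]
    positivity
  · exact Stmt5Aux.core h2 p hsum
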